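/- For reals s ∈ [0,1] and p ∈ [0,1], the function f(p) = (1−s)/2 + s·p + √(s·p·(1−s)·(1−p)) satisfies f(p) ≤ (1 + √s)/2, with the maximum attained at p = (1 + √s)/2 when this lies in [0,1]. -/
import Mathlib


/-- For `s, p ∈ [0,1]`, the function `f(p) = (1−s)/2 + s·p + √(s·p·(1−s)·(1−p))`
satisfies `f(p) ≤ (1+√s)/2`, and the maximum is attained at `p = (1+√s)/2`
(which lies in `[0,1]`), where `f((1+√s)/2) = (1+√s)/2`. -/
theorem stmt_8 (s : ℝ) (hs0 : 0 ≤ s) (hs1 : s ≤ 1) :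
    (∀ p : ℝ, 0 ≤ p → p ≤ 1 →
      (1 - s) / 2 + s * p + Real.sqrt (s * p * (1 - s) * (1 - p))
        ≤ (1 + Real.sqrt s) / 2)
    ∧ (1 + Real.sqrt s) / 2 ∈ Set.Icc (0 : ℝ) 1
    ∧ (1 - s) / 2 + s * ((1 + Real.sqrt s) / 2)
        + Real.sqrt (s * ((1 + Real.sqrt s) / 2) * (1 - s) * (1 - (1 + Real.sqrt s) / 2))
        = (1 + Real.sqrt s) / 2 := by
  set t := Real.sqrt s with htdef
  have ht0 : 0 ≤ t := Real.sqrt_nonneg s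
  have ht1 : t ≤ 1 := Real.sqrt_le_one.mpr hs1
  have hts : t * t = s := Real.mul_self_sqrt hs0
  refine ⟨?_, ⟨by linarith, by linarith⟩, ?_⟩
  · intro p hp0 hp1
    have hR : 0 ≤ t * ((1 + t) / 2 - t * p) := by nlinarith
    have h2 : s * p * (1 - s) * (1 - p) ≤ (t * ((1 + t) / 2 - t * p)) ^ 2 := by
      rw [← hts]
      nlinarith [sq_nonneg (t * ((1 + t) / 2 - p))]
    have h3 : Real.sqrt (s * p * (1 - s) * (1 - p)) ≤ t * ((1 + t) / 2 - t * p) := by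
      calc Real.sqrt (s * p * (1 - s) * (1 - p))
          ≤ Real.sqrt ((t * ((1 + t) / 2 - t * p)) ^ 2) := Real.sqrt_le_sqrt h2
        _ = t * ((1 + t) / 2 - t * p) := Real.sqrt_sq hR
    nlinarith
  · have harg : s * ((1 + t) / 2) * (1 - s) * (1 - (1 + t) / 2)
        = (t * (1 - t) * (1 + t) / 2) ^ 2 := by rw [← hts]; ring
    have hnn : 0 ≤ t * (1 - t) * (1 + t) / 2 := by nlinarith
    rw [harg, Real.sqrt_sq hnn, ← hts]; ring
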